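/- For every pair of positive integers m and k, there exists a finite (solvable) group G such that cd(G) = {1, n, n², …, n^k} where n is a product of m distinct primes; consequently the bipartite divisor graph B(G) is isomorphic to the complete bipartite graph K_{m,k}. -/

import Mathlib

open SimpleGraph

/-- Vertex type of the bipartite divisor graph of a set of naturals:
the disjoint union of `X` and of the primes dividing some element of `X`. -/
abbrev BDGVert (X : Set ℕ) : Type :=
  {x : ℕ // x ∈ X} ⊕ {p : ℕ // p.Prime ∧ ∃ x ∈ X, p ∣ x}

/-- The bipartite divisor graph `B(X)`: a prime `p` is adjacent to `x ∈ X` iff `p ∣ x`. -/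
def bdg (X : Set ℕ) : SimpleGraph (BDGVert X) :=
  SimpleGraph.fromRel (fun a b =>
    match a, b with
    | Sum.inr p, Sum.inl x => p.1 ∣ x.1
    | _, _ => False)

/-- The prime graph `Δ(X)`: primes `p ≠ q` are adjacent iff `pq` divides some element of `X`. -/
def primeGraph (X : Set ℕ) : SimpleGraph {p : ℕ // p.Prime ∧ ∃ x ∈ X, p ∣ x} :=
  SimpleGraph.fromRel (fun p q => ∃ x ∈ X, p.1 * q.1 ∣ x)

/-- The common divisor graph `Γ(X)`: distinct `x, y ∈ X` are adjacent iff `gcd(x,y) ≠ 1`. -/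
def cdGraph (X : Set ℕ) : SimpleGraph {x : ℕ // x ∈ X} :=
  SimpleGraph.fromRel (fun a b => Nat.gcd a.1 b.1 ≠ 1)

/-- The set of irreducible complex character degrees of a group `G`. -/
def charDegrees (G : Type) [Group G] : Set ℕ :=
  {n | ∃ V : FDRep ℂ G, CategoryTheory.Simple V ∧ Module.finrank ℂ V = n}

/-- Disjoint union of two simple graphs. -/
def disjUnionGraph {α β : Type*} (G : SimpleGraph α) (H : SimpleGraph β) :
    SimpleGraph (α ⊕ β) where
  Adj a b :=
    match a, b with
    | Sum.inl x, Sum.inl y => G.Adj x y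
    | Sum.inr x, Sum.inr y => H.Adj x y
    | _, _ => False
  symm := by
    exact ⟨by rintro (x | x) (y | y) h <;> simp_all <;> exact h.symm⟩
  loopless := by
    exact ⟨by rintro (x | x) h <;> simp_all⟩


namespace BDGProof

/-- Subtype of units of `ZMod p` whose `n`-th power is one. -/
def Uroot (p n : ℕ) : Type := {u : (ZMod p)ˣ // u ^ n = 1}

variable {p n : ℕ}

/-- `u ^ t` for `t : ZMod n`. -/
def epow [NeZero n] (u : Uroot p n) (t : ZMod n) : (ZMod p)ˣ := u.1 ^ t.val

lemma epow_add [NeZero n] (u : Uroot p n) (s t : ZMod n) :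
    epow u (s + t) = epow u s * epow u t := by
  unfold epow
  rw [ZMod.val_add, ← pow_eq_pow_mod _ u.2, pow_add]

lemma epow_zero [NeZero n] (u : Uroot p n) : epow u 0 = 1 := by
  simp [epow, ZMod.val_zero]

lemma epow_neg [NeZero n] (u : Uroot p n) (t : ZMod n) : epow u (-t) = (epow u t)⁻¹ := by
  apply eq_inv_of_mul_eq_one_left
  rw [← epow_add, neg_add_cancel, epow_zero]

lemma epow_inj [NeZero n] (u : Uroot p n) (h : orderOf u.1 = n) {s t : ZMod n}
    (hst : epow u s = epow u t) : s = t := by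
  unfold epow at hst
  rw [pow_eq_pow_iff_modEq, h] at hst
  have h1 : s.val % n = t.val % n := hst
  rw [Nat.mod_eq_of_lt (ZMod.val_lt s), Nat.mod_eq_of_lt (ZMod.val_lt t)] at h1
  exact ZMod.val_injective n h1

variable (p n) in
/-- The group `(ZMod p)^k ⋊ (ZMod n)^k`, with `ZMod n` acting via powers of `u`. -/
@[ext] structure MyG (k : ℕ) (u : Uroot p n) where
  a : Fin k → ZMod p
  s : Fin k → ZMod n

namespace MyG

variable {k : ℕ} {u : Uroot p n} [NeZero n] [NeZero p]

instance instGroup : Group (MyG p n k u) where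
  mul g h := ⟨fun j => g.a j + (epow u (g.s j) : (ZMod p)ˣ) * h.a j, g.s + h.s⟩
  one := ⟨0, 0⟩
  inv g := ⟨fun j => -((epow u (-g.s j) : (ZMod p)ˣ) * g.a j), -g.s⟩
  mul_assoc g h l := by
    refine MyG.ext (funext fun j => ?_) (funext fun j => ?_)
    · show (g.a j + (epow u (g.s j) : (ZMod p)ˣ) * h.a j)
          + (epow u ((g.s + h.s) j) : (ZMod p)ˣ) * l.a j
        = g.a j + (epow u (g.s j) : (ZMod p)ˣ)
          * (h.a j + (epow u (h.s j) : (ZMod p)ˣ) * l.a j)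
      show (g.a j + (epow u (g.s j) : (ZMod p)ˣ) * h.a j)
          + (epow u (g.s j + h.s j) : (ZMod p)ˣ) * l.a j = _
      rw [epow_add]
      push_cast
      ring
    · show (g.s + h.s) j + l.s j = g.s j + (h.s + l.s) j
      show g.s j + h.s j + l.s j = g.s j + (h.s j + l.s j)
      rw [add_assoc]
  one_mul g := by
    refine MyG.ext (funext fun j => ?_) (funext fun j => ?_)
    · show (0 : ZMod p) + (epow u ((0 : Fin k → ZMod n) j) : (ZMod p)ˣ) * g.a j = g.a j
      show (0 : ZMod p) + (epow u (0 : ZMod n) : (ZMod p)ˣ) * g.a j = g.a j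
      rw [epow_zero]; simp
    · show (0 : ZMod n) + g.s j = g.s j
      rw [zero_add]
  mul_one g := by
    refine MyG.ext (funext fun j => ?_) (funext fun j => ?_)
    · show g.a j + (epow u (g.s j) : (ZMod p)ˣ) * (0 : ZMod p) = g.a j
      simp
    · show g.s j + (0 : ZMod n) = g.s j
      rw [add_zero]
  inv_mul_cancel g := by
    refine MyG.ext (funext fun j => ?_) (funext fun j => ?_)
    · show -((epow u (-g.s j) : (ZMod p)ˣ) * g.a j)
          + (epow u (-g.s j) : (ZMod p)ˣ) * g.a j = (0 : ZMod p)
      rw [neg_add_cancel]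
    · show -g.s j + g.s j = (0 : ZMod n)
      rw [neg_add_cancel]

lemma mul_def (g h : MyG p n k u) :
    g * h = ⟨fun j => g.a j + (epow u (g.s j) : (ZMod p)ˣ) * h.a j, g.s + h.s⟩ := rfl

lemma one_def : (1 : MyG p n k u) = ⟨0, 0⟩ := rfl

instance : Finite (MyG p n k u) :=
  Finite.of_injective (fun g => (g.a, g.s)) (by intro g h hf; simp at hf; ext j <;> simp [hf.1, hf.2])

/-- projection to the `s`-part. -/
def proj : MyG p n k u →* Multiplicative (Fin k → ZMod n) where
  toFun g := Multiplicative.ofAdd g.s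
  map_one' := rfl
  map_mul' g h := rfl

/-- embedding of the `a`-part. -/
def emb : Multiplicative (Fin k → ZMod p) →* MyG p n k u where
  toFun a := ⟨a.toAdd, 0⟩
  map_one' := rfl
  map_mul' a b := by
    refine (MyG.ext ?_ ?_).symm <;> simp [mul_def, epow_zero] <;> rfl

instance : Group.IsSolvable (MyG p n k u) :=
  solvable_of_ker_le_range emb proj (by
    intro g hg
    have hs : g.s = 0 := hg
    exact ⟨Multiplicative.ofAdd g.a, by
      refine MyG.ext rfl ?_
      show (0 : Fin k → ZMod n) = g.s
      rw [hs]⟩)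

end MyG


-- ===== assume chunk1 present: we re-import by inlining later =====
section Chars
variable (p : ℕ) [NeZero p]

/-- The standard additive character of `ZMod p` with values in `ℂ`. -/
noncomputable def χp : AddChar (ZMod p) ℂ :=
  AddChar.zmodChar p (Complex.isPrimitiveRoot_exp p (NeZero.ne p)).pow_eq_one

lemma χp_prim : (χp p).IsPrimitive :=
  AddChar.zmodChar_primitive_of_primitive_root p (Complex.isPrimitiveRoot_exp p (NeZero.ne p))

lemma χp_eq_one_iff (a : ZMod p) : χp p a = 1 ↔ a = 0 :=
  (χp_prim p).zmod_char_eq_one_iff p a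

lemma χp_mul_neg (a : ZMod p) : χp p a * χp p (-a) = 1 := by
  rw [← AddChar.map_add_eq_mul, add_neg_cancel, AddChar.map_zero_eq_one]

lemma χp_ne_zero (a : ZMod p) : χp p a ≠ 0 := by
  intro h
  have := χp_mul_neg p a
  rw [h, zero_mul] at this
  exact zero_ne_one this

lemma χp_sum [Fact p.Prime] (b : ZMod p) :
    ∑ x : ZMod p, χp p (b * x) = if b = 0 then (p : ℂ) else 0 := by
  simp_rw [mul_comm b]
  rw [AddChar.sum_mulShift b (χp_prim p)]
  split_ifs <;> simp [ZMod.card]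

end Chars

section Theta
variable (p : ℕ) {k : ℕ} [NeZero p]

/-- Multi-dimensional character pairing. -/
noncomputable def Θ (c a : Fin k → ZMod p) : ℂ := ∏ j, χp p (c j * a j)

lemma Θ_comm (c a : Fin k → ZMod p) : Θ p c a = Θ p a c := by
  unfold Θ; simp_rw [mul_comm]

lemma Θ_add_right (c a b : Fin k → ZMod p) : Θ p c (a + b) = Θ p c a * Θ p c b := by
  unfold Θ
  rw [← Finset.prod_mul_distrib]
  refine Finset.prod_congr rfl fun j _ => ?_
  rw [Pi.add_apply, mul_add, AddChar.map_add_eq_mul]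

lemma Θ_add_left (c d a : Fin k → ZMod p) : Θ p (c + d) a = Θ p c a * Θ p d a := by
  rw [Θ_comm, Θ_add_right, Θ_comm p a c, Θ_comm p a d]

lemma Θ_zero_right (c : Fin k → ZMod p) : Θ p c 0 = 1 := by
  unfold Θ; simp

lemma Θ_zero_left (a : Fin k → ZMod p) : Θ p 0 a = 1 := by
  rw [Θ_comm, Θ_zero_right]

lemma Θ_ne_zero (c a : Fin k → ZMod p) : Θ p c a ≠ 0 :=
  Finset.prod_ne_zero_iff.mpr fun j _ => χp_ne_zero p _

lemma Θ_neg_right (c a : Fin k → ZMod p) : Θ p c (-a) = (Θ p c a)⁻¹ := by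
  apply eq_inv_of_mul_eq_one_left
  rw [← Θ_add_right, neg_add_cancel, Θ_zero_right]

lemma Θ_neg_left (c a : Fin k → ZMod p) : Θ p (-c) a = (Θ p c a)⁻¹ := by
  rw [Θ_comm, Θ_neg_right, Θ_comm]

lemma Θ_inv_mul (c c' a : Fin k → ZMod p) : (Θ p c a)⁻¹ * Θ p c' a = Θ p (c' - c) a := by
  rw [sub_eq_add_neg, Θ_add_left, Θ_neg_left, mul_comm]

lemma Θ_sum [Fact p.Prime] (c : Fin k → ZMod p) :
    ∑ a : Fin k → ZMod p, Θ p c a = if c = 0 then ((p : ℂ)) ^ k else 0 := by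
  classical
  unfold Θ
  rw [← Fintype.piFinset_univ, ← Finset.prod_univ_sum (fun _ => Finset.univ)
    (fun j x => χp p (c j * x))]
  by_cases hc : c = 0
  · subst hc
    simp [Finset.prod_const, ZMod.card]
  · obtain ⟨j0, hj0⟩ := Function.ne_iff.mp hc
    have hj0' : c j0 ≠ 0 := by simpa using hj0
    rw [if_neg hc]
    apply Finset.prod_eq_zero (Finset.mem_univ j0)
    rw [χp_sum p (c j0), if_neg hj0']

end Theta



section Elems
variable {p n k : ℕ} [NeZero n] [NeZero p] {u : Uroot p n}

namespace MyG

/-- element of the abelian normal part.  -/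
def gA (u : Uroot p n) (a : Fin k → ZMod p) : MyG p n k u := ⟨a, 0⟩

/-- element of the complement. -/
def gQ (u : Uroot p n) (s : Fin k → ZMod n) : MyG p n k u := ⟨0, s⟩

/-- twisted action of `s` on vectors of `ZMod p`. -/
def σ (u : Uroot p n) (s : Fin k → ZMod n) (a : Fin k → ZMod p) : Fin k → ZMod p :=
  fun j => (epow u (s j) : (ZMod p)ˣ) * a j

lemma gA_mul (a b : Fin k → ZMod p) : gA u a * gA u b = gA u (a + b) := by
  refine MyG.ext (funext fun j => ?_) (funext fun j => ?_)
  · show a j + (epow u ((0 : Fin k → ZMod n) j) : (ZMod p)ˣ) * b j = a j + b j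
    show a j + (epow u (0 : ZMod n) : (ZMod p)ˣ) * b j = a j + b j
    rw [epow_zero]; simp
  · show (0 : ZMod n) + 0 = 0
    simp

lemma gQ_mul (s t : Fin k → ZMod n) : gQ u s * gQ u t = gQ u (s + t) := by
  refine MyG.ext (funext fun j => ?_) rfl
  show (0 : ZMod p) + (epow u (s j) : (ZMod p)ˣ) * 0 = 0
  simp

lemma gA_zero : gA u (0 : Fin k → ZMod p) = 1 := rfl

lemma gQ_zero : gQ u (0 : Fin k → ZMod n) = 1 := rfl

lemma gA_gQ (a : Fin k → ZMod p) (s : Fin k → ZMod n) :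
    gA u a * gQ u s = ⟨a, s⟩ := by
  refine MyG.ext (funext fun j => ?_) (funext fun j => ?_)
  · show a j + (epow u (0 : ZMod n) : (ZMod p)ˣ) * 0 = a j
    simp
  · show (0 : ZMod n) + s j = s j
    simp

lemma gQ_gA (s : Fin k → ZMod n) (a : Fin k → ZMod p) :
    gQ u s * gA u a = gA u (σ u s a) * gQ u s := by
  rw [gA_gQ]
  refine MyG.ext (funext fun j => ?_) (funext fun j => ?_)
  · show (0 : ZMod p) + (epow u (s j) : (ZMod p)ˣ) * a j = σ u s a j
    simp [σ]
  · show s j + 0 = s j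
    simp

lemma σ_σ (s t : Fin k → ZMod n) (a : Fin k → ZMod p) :
    σ u s (σ u t a) = σ u (s + t) a := by
  funext j
  simp [σ, epow_add, mul_assoc]

lemma σ_zero (a : Fin k → ZMod p) : σ u (0 : Fin k → ZMod n) a = a := by
  funext j
  show (epow u (0:ZMod n) : (ZMod p)ˣ) * a j = a j
  rw [epow_zero]; simp

lemma σ_neg_σ (s : Fin k → ZMod n) (a : Fin k → ZMod p) :
    σ u (-s) (σ u s a) = a := by
  rw [σ_σ, neg_add_cancel, σ_zero]

lemma Θ_σ (c a : Fin k → ZMod p) (s : Fin k → ZMod n) :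
    Θ p c (σ u s a) = Θ p (σ u s c) a := by
  unfold Θ σ
  refine Finset.prod_congr rfl fun j _ => ?_
  ring_nf

lemma σ_add_right (s : Fin k → ZMod n) (a b : Fin k → ZMod p) :
    σ u s (a + b) = σ u s a + σ u s b := by
  funext j
  simp [σ, mul_add]

end MyG

end Elems


section Bridge
open CategoryTheory
variable {G : Type} [Group G]

/-- A submodule is invariant under the representation. -/
def IsInvariant (V : FDRep ℂ G) (U : Submodule ℂ V) : Prop := ∀ g : G, ∀ v ∈ U, V.ρ g v ∈ U

lemma hom_congr {V W : FDRep ℂ G} {f g : V ⟶ W} (h : f = g) (v : V) : f.hom v = g.hom v := by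
  rw [h]

lemma comp_hom_apply {V W X : FDRep ℂ G} (f : V ⟶ W) (g : W ⟶ X) (v : V) :
    (f ≫ g).hom v = g.hom (f.hom v) := rfl

lemma id_hom_apply {V : FDRep ℂ G} (v : V) : (𝟙 V : V ⟶ V).hom v = v := rfl

lemma zero_hom_apply {V W : FDRep ℂ G} (v : V) : (0 : V ⟶ W).hom v = 0 := rfl

lemma comm_apply {V W : FDRep ℂ G} (f : V ⟶ W) (g : G) (v : V) :
    f.hom (V.ρ g v) = W.ρ g (f.hom v) :=
  congrFun (congrArg (fun (h : V.V ⟶ W.V) => (h : V → W)) (f.comm g)) v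

/-- representation on an invariant submodule. -/
noncomputable def resRep (V : FDRep ℂ G) (U : Submodule ℂ V) (hU : IsInvariant V U) :
    Representation ℂ G ↥U where
  toFun g := (V.ρ g).restrict (fun v hv => hU g v hv)
  map_one' := by ext v; simp [LinearMap.restrict_apply]
  map_mul' g h := by ext v; simp [LinearMap.restrict_apply]

/-- the inclusion morphism of an invariant submodule. -/
noncomputable def inclMor (V : FDRep ℂ G) (U : Submodule ℂ V) (hU : IsInvariant V U) :
    FDRep.of (resRep V U hU) ⟶ V where
  hom := ConcreteCategory.ofHom U.subtype
  comm g := by ext v; rfl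

lemma inclMor_mono (V : FDRep ℂ G) (U : Submodule ℂ V) (hU : IsInvariant V U) :
    Mono (inclMor V U hU) := by
  constructor
  intro Z g h hgh
  apply Action.hom_ext
  apply FGModuleCat.hom_ext
  apply LinearMap.ext
  intro z
  have hz := hom_congr hgh z
  rw [comp_hom_apply, comp_hom_apply] at hz
  exact Subtype.ext hz

lemma nontrivial_of_simple (V : FDRep ℂ G) [Simple V] : Nontrivial V := by
  by_contra h
  rw [not_nontrivial_iff_subsingleton] at h
  refine CategoryTheory.id_nonzero V ?_
  apply Action.hom_ext
  apply FGModuleCat.hom_ext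
  apply LinearMap.ext
  intro v
  exact h.elim _ _

lemma invariant_eq_bot_or_top (V : FDRep ℂ G) [Simple V] (U : Submodule ℂ V)
    (hU : IsInvariant V U) : U = ⊥ ∨ U = ⊤ := by
  rcases eq_or_ne U ⊥ with h | h
  · exact Or.inl h
  right
  obtain ⟨u₀, hu₀U, hu₀⟩ := Submodule.ne_bot_iff U |>.mp h
  set f := inclMor V U hU with hfdef
  have hf0 : f ≠ 0 := by
    intro hf
    apply hu₀
    have := hom_congr hf (⟨u₀, hu₀U⟩ : ↥U)
    exact this
  haveI : Mono f := inclMor_mono V U hU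
  have hiso : IsIso f := (Simple.mono_isIso_iff_nonzero f).mpr hf0
  rw [Submodule.eq_top_iff']
  intro v
  have hv := hom_congr (IsIso.inv_hom_id f) v
  rw [comp_hom_apply, id_hom_apply] at hv
  rw [← hv]
  exact ((inv f).hom v : ↥U).2

lemma simple_of_irred (V : FDRep ℂ G) (h1 : Nontrivial V)
    (h2 : ∀ U : Submodule ℂ V, IsInvariant V U → U = ⊥ ∨ U = ⊤) : Simple V := by
  constructor
  intro Y f hmono
  constructor
  · intro hiso h0
    have hid : (𝟙 V : V ⟶ V) = 0 := by
      calc (𝟙 V : V ⟶ V) = inv f ≫ f := (IsIso.inv_hom_id f).symm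
        _ = inv f ≫ 0 := congrArg (CategoryTheory.CategoryStruct.comp (inv f)) h0
        _ = 0 := Limits.comp_zero
    obtain ⟨x, y, hxy⟩ := h1
    apply hxy
    have hx := hom_congr hid x
    have hy := hom_congr hid y
    rw [id_hom_apply, zero_hom_apply] at hx hy
    exact hx.trans hy.symm
  · intro hf0
    have hfhom0 : f.hom.hom.hom ≠ 0 := by
      intro h; exact hf0 (Action.hom_ext _ _ (FGModuleCat.hom_ext h))
    -- range is invariant, hence ⊤
    have hUinv : IsInvariant V (LinearMap.range f.hom.hom.hom) := by
      rintro g v ⟨y, rfl⟩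
      exact ⟨Y.ρ g y, comm_apply f g y⟩
    have hUtop : LinearMap.range f.hom.hom.hom = ⊤ := by
      rcases h2 _ hUinv with h | h
      · exact absurd (LinearMap.range_eq_bot.mp h) hfhom0
      · exact h
    -- kernel is invariant in Y; use mono to kill it
    have hKinv : IsInvariant Y (LinearMap.ker f.hom.hom.hom) := by
      intro g v hv
      have hv0 : f.hom.hom.hom v = 0 := hv
      have : f.hom (Y.ρ g v) = 0 := by
        rw [comm_apply f g v]
        show (V.ρ g) (f.hom.hom.hom v) = 0
        rw [hv0, map_zero]
      exact LinearMap.mem_ker.mpr this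
    set K := LinearMap.ker f.hom.hom.hom with hKdef
    have hcomp : inclMor Y K hKinv ≫ f = (0 : FDRep.of (resRep Y K hKinv) ⟶ V) := by
      apply Action.hom_ext
      apply FGModuleCat.hom_ext
      apply LinearMap.ext
      rintro ⟨y, hy⟩
      exact hy
    have hι0 : inclMor Y K hKinv = 0 :=
      Mono.right_cancellation _ _ (by rw [hcomp, Limits.zero_comp])
    have hK : K = ⊥ := by
      by_contra hKne
      obtain ⟨x₀, hx₀K, hx₀⟩ := Submodule.ne_bot_iff K |>.mp hKne
      apply hx₀
      have := hom_congr hι0 (⟨x₀, hx₀K⟩ : ↥K)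
      exact this
    have hbij : Function.Bijective f.hom.hom.hom :=
      ⟨LinearMap.ker_eq_bot.mp hK, LinearMap.range_eq_top.mp hUtop⟩
    set e := LinearEquiv.ofBijective f.hom.hom.hom hbij with hedef
    refine ⟨⟨⟨ConcreteCategory.ofHom e.symm.toLinearMap, fun g => ?_⟩, ?_, ?_⟩⟩
    · apply FGModuleCat.hom_ext
      apply LinearMap.ext
      intro v
      show e.symm ((V.ρ g) v) = (Y.ρ g) (e.symm v)
      apply e.injective
      have h1' : e (e.symm ((V.ρ g) v)) = (V.ρ g) v := e.apply_symm_apply _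
      have h2' : e ((Y.ρ g) (e.symm v)) = (V.ρ g) v := by
        show f.hom ((Y.ρ g) (e.symm v)) = _
        rw [comm_apply f g (e.symm v)]
        congr 1
        exact e.apply_symm_apply v
      exact h1'.trans h2'.symm
    · apply Action.hom_ext
      apply FGModuleCat.hom_ext
      apply LinearMap.ext
      intro y
      exact e.symm_apply_apply y
    · apply Action.hom_ext
      apply FGModuleCat.hom_ext
      apply LinearMap.ext
      intro v
      exact e.apply_symm_apply v

end Bridge


section CommEig
variable {W : Type} [AddCommGroup W] [Module ℂ W] [FiniteDimensional ℂ W]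

lemma exists_common_eigenvector [Nontrivial W] {ι : Type} [Fintype ι]
    (g : ι → Module.End ℂ W) (hg : ∀ i j, Commute (g i) (g j)) :
    ∃ v : W, v ≠ 0 ∧ ∀ i, ∃ μ : ℂ, g i v = μ • v := by
  classical
  have key : ∀ F : Finset ι, ∃ E : Submodule ℂ W, E ≠ ⊥ ∧ (∀ j, ∀ v ∈ E, g j v ∈ E) ∧
      (∀ i ∈ F, ∃ μ : ℂ, ∀ v ∈ E, g i v = μ • v) := by
    intro F
    induction F using Finset.induction with
    | empty =>
      refine ⟨⊤, ?_, fun _ _ _ => trivial, fun i hi => absurd hi (Finset.notMem_empty i)⟩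
      rw [Submodule.ne_bot_iff]
      obtain ⟨x, hx⟩ := exists_ne (0 : W)
      exact ⟨x, trivial, hx⟩
    | insert i₀ F hnotmem ih =>
      obtain ⟨E, hE1, hinv, heval⟩ := ih
      haveI : Nontrivial ↥E := Submodule.nontrivial_iff_ne_bot.mpr hE1
      set r : Module.End ℂ ↥E := (g i₀).restrict (fun v hv => hinv i₀ v hv) with hrdef
      obtain ⟨μ₀, hμ₀⟩ := Module.End.exists_eigenvalue r
      obtain ⟨w, hw⟩ := hμ₀.exists_hasEigenvector
      refine ⟨(Module.End.eigenspace r μ₀).map E.subtype, ?_, ?_, ?_⟩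
      · rw [Submodule.ne_bot_iff]
        exact ⟨(w : W), ⟨w, hw.1, rfl⟩, by
          simpa [Submodule.coe_eq_zero] using hw.2⟩
      · rintro j v ⟨x, hx, rfl⟩
        have hx0 : x ∈ r.eigenspace μ₀ := hx
        have hx' : g i₀ (x : W) = μ₀ • (x : W) := by
          have := Module.End.mem_eigenspace_iff.mp hx0
          have h2 := congrArg (Submodule.subtype E) this
          simpa [hrdef, LinearMap.restrict_coe_apply] using h2
        refine ⟨⟨g j (x : W), hinv j _ x.2⟩, ?_, rfl⟩
        have hmem : (⟨g j (x : W), hinv j _ x.2⟩ : ↥E) ∈ r.eigenspace μ₀ := by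
          rw [Module.End.mem_eigenspace_iff]
          apply Subtype.ext
          have hcomm : g i₀ (g j (x : W)) = g j (g i₀ (x : W)) := by
            have := hg i₀ j
            exact congrFun (congrArg (fun (f : Module.End ℂ W) => (f : W → W)) this) (x : W)
          show g i₀ (g j (x : W)) = μ₀ • g j (x : W)
          rw [hcomm, hx', map_smul]
        exact hmem
      · intro i hi
        rcases Finset.mem_insert.mp hi with h | h
        · subst h
          refine ⟨μ₀, ?_⟩
          rintro v ⟨x, hx, rfl⟩
          have hx0 : x ∈ r.eigenspace μ₀ := hx
          have := Module.End.mem_eigenspace_iff.mp hx0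
          have h2 := congrArg (Submodule.subtype E) this
          simpa [hrdef, LinearMap.restrict_coe_apply] using h2
        · obtain ⟨μ, hμ⟩ := heval i h
          refine ⟨μ, fun v hv => hμ v ?_⟩
          obtain ⟨x, _, rfl⟩ := hv
          exact x.2
  obtain ⟨E, hE1, _, heval⟩ := key Finset.univ
  obtain ⟨v, hvE, hv0⟩ := Submodule.ne_bot_iff E |>.mp hE1
  exact ⟨v, hv0, fun i => by
    obtain ⟨μ, hμ⟩ := heval i (Finset.mem_univ i)
    exact ⟨μ, hμ v hvE⟩⟩

end CommEig


section Core
open MyG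
variable {p n k : ℕ} [Fact p.Prime] [NeZero p] [NeZero n] {u : Uroot p n}

/-- The simultaneous eigenspace of the abelian part with character `Θ c`. -/
noncomputable def Eig (V : FDRep ℂ (MyG p n k u)) (c : Fin k → ZMod p) : Submodule ℂ V where
  carrier := {v | ∀ a, V.ρ (gA u a) v = Θ p c a • v}
  add_mem' := by
    intro x y hx hy
    intro a
    rw [map_add, hx a, hy a, smul_add]
  zero_mem' := by intro a; rw [map_zero, smul_zero]
  smul_mem' := by
    intro t x hx a
    rw [map_smul, hx a, smul_comm]

lemma mem_Eig {V : FDRep ℂ (MyG p n k u)} {c : Fin k → ZMod p} {v : V} :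
    v ∈ Eig V c ↔ ∀ a, V.ρ (gA u a) v = Θ p c a • v := Iff.rfl

/-- Projection (up to scalar) onto `Eig V c`. -/
noncomputable def Pc (V : FDRep ℂ (MyG p n k u)) (c : Fin k → ZMod p) : Module.End ℂ V :=
  ∑ a : Fin k → ZMod p, (Θ p c a)⁻¹ • (V.ρ (gA u a) : Module.End ℂ V)

lemma Pc_apply (V : FDRep ℂ (MyG p n k u)) (c : Fin k → ZMod p) (v : V) :
    Pc V c v = ∑ a : Fin k → ZMod p, (Θ p c a)⁻¹ • (V.ρ (gA u a) v) := by
  simp [Pc, LinearMap.sum_apply]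

lemma Pc_mem_Eig (V : FDRep ℂ (MyG p n k u)) (c : Fin k → ZMod p) (v : V) :
    Pc V c v ∈ Eig V c := by
  intro b
  rw [Pc_apply, map_sum]
  have step : ∀ a, V.ρ (gA u b) ((Θ p c a)⁻¹ • (V.ρ (gA u a) v))
      = (Θ p c a)⁻¹ • (V.ρ (gA u (b + a)) v) := by
    intro a
    rw [map_smul]
    congr 1
    rw [← gA_mul, map_mul]
    rfl
  simp_rw [step]
  rw [Finset.smul_sum]
  refine Fintype.sum_equiv (Equiv.addLeft b) _ _ ?_
  intro x
  simp only [Equiv.coe_addLeft]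
  rw [smul_smul]
  congr 1
  have hbx : Θ p c (b + x) = Θ p c b * Θ p c x := Θ_add_right p c b x
  rw [hbx, mul_inv, ← mul_assoc, mul_inv_cancel₀ (Θ_ne_zero p c b), one_mul]
lemma Pc_of_mem_Eig {V : FDRep ℂ (MyG p n k u)} {c c' : Fin k → ZMod p} {v : V}
    (hv : v ∈ Eig V c) : Pc V c' v = (if c' = c then ((p : ℂ)) ^ k else 0) • v := by
  classical
  rw [Pc_apply]
  have step : ∀ a, (Θ p c' a)⁻¹ • (V.ρ (gA u a) v) = Θ p (c - c') a • v := by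
    intro a
    rw [hv a, smul_smul, Θ_inv_mul]
  simp_rw [step]
  rw [← Finset.sum_smul, Θ_sum]
  congr 1
  by_cases h : c' = c
  · subst h; simp
  · rw [if_neg, if_neg h]
    intro hcc
    rw [sub_eq_zero] at hcc
    exact h hcc.symm

lemma sum_Pc (V : FDRep ℂ (MyG p n k u)) (v : V) :
    ∑ c : Fin k → ZMod p, Pc V c v = ((p : ℂ)) ^ k • v := by
  classical
  simp_rw [Pc_apply]
  rw [Finset.sum_comm]
  have step : ∀ a, ∑ c : Fin k → ZMod p, (Θ p c a)⁻¹ • (V.ρ (gA u a) v)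
      = (if a = 0 then ((p:ℂ))^k else 0) • (V.ρ (gA u a) v) := by
    intro a
    rw [← Finset.sum_smul]
    congr 1
    have : ∀ c : Fin k → ZMod p, (Θ p c a)⁻¹ = Θ p (-a) c := by
      intro c
      rw [← Θ_neg_right, Θ_comm]
    simp_rw [this]
    rw [Θ_sum]
    simp [neg_eq_zero]
  simp_rw [step, ite_smul, zero_smul]
  rw [Finset.sum_ite_eq' Finset.univ (0 : Fin k → ZMod p)]
  simp [gA_zero]

lemma exists_Eig_ne_bot (V : FDRep ℂ (MyG p n k u)) [Nontrivial V] :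
    ∃ c : Fin k → ZMod p, Eig V c ≠ ⊥ := by
  by_contra hall
  push_neg at hall
  obtain ⟨v₀, hv₀⟩ := exists_ne (0 : V)
  have h1 : ∑ c : Fin k → ZMod p, Pc V c v₀ = 0 := by
    apply Finset.sum_eq_zero
    intro c _
    have := Pc_mem_Eig V c v₀
    rw [hall c] at this
    simpa using this
  rw [sum_Pc] at h1
  have hp : ((p:ℂ))^k ≠ 0 := by
    apply pow_ne_zero
    exact_mod_cast (Fact.out : p.Prime).ne_zero
  exact hv₀ (by simpa [hp] using h1)

lemma Eig_gQ {V : FDRep ℂ (MyG p n k u)} {c : Fin k → ZMod p} {v : V}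
    (hv : v ∈ Eig V c) (s : Fin k → ZMod n) :
    V.ρ (gQ u s) v ∈ Eig V (σ u (-s) c) := by
  intro a
  have hg : gA u a * gQ u s = gQ u s * gA u (σ u (-s) a) := by
    rw [gQ_gA, σ_σ, add_neg_cancel, σ_zero]
  have h1 : V.ρ (gA u a) (V.ρ (gQ u s) v) = V.ρ (gQ u s) (V.ρ (gA u (σ u (-s) a)) v) := by
    rw [← Module.End.mul_apply, ← map_mul, hg, map_mul, Module.End.mul_apply]
  rw [h1, hv (σ u (-s) a), map_smul, Θ_σ]

end Core


section MainB
open MyG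
variable {p n k : ℕ} [Fact p.Prime] [NeZero p] [NeZero n] {u : Uroot p n}

/-- extend a function on the support of `c` by zero. -/
noncomputable def extJ (c : Fin k → ZMod p) (t : {j : Fin k // c j ≠ 0} → ZMod n) :
    Fin k → ZMod n := fun l => if h : c l ≠ 0 then t ⟨l, h⟩ else 0

lemma extJ_apply (c : Fin k → ZMod p) (t : {j : Fin k // c j ≠ 0} → ZMod n) {l : Fin k}
    (h : c l ≠ 0) : extJ c t l = t ⟨l, h⟩ := dif_pos h

lemma extJ_zero (c : Fin k → ZMod p) :
    extJ c (0 : {j : Fin k // c j ≠ 0} → ZMod n) = 0 := by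
  funext l
  unfold extJ
  split <;> rfl

lemma σ_stab {c : Fin k → ZMod p} {s : Fin k → ZMod n}
    (hs : ∀ l, c l ≠ 0 → s l = 0) : σ u s c = c := by
  funext l
  by_cases h : c l = 0
  · show (epow u (s l) : (ZMod p)ˣ) * c l = c l
    rw [h, mul_zero]
  · have h2 := hs l h
    show (epow u (s l) : (ZMod p)ˣ) * c l = c l
    rw [h2, epow_zero]
    simp

lemma finrank_of_simple (horder : orderOf u.1 = n) (V : FDRep ℂ (MyG p n k u))
    [hS : CategoryTheory.Simple V] :
    ∃ i ≤ k, Module.finrank ℂ V = n ^ i := by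
  classical
  haveI hnt : Nontrivial V := nontrivial_of_simple V
  obtain ⟨c, hc⟩ := exists_Eig_ne_bot V
  have hpk : ((p:ℂ))^k ≠ 0 := pow_ne_zero _ (by exact_mod_cast (Fact.out : p.Prime).ne_zero)
  -- restricted operators of the stabilizer on `Eig V c`
  have hmapsto : ∀ st : {s : Fin k → ZMod n // ∀ l, c l ≠ 0 → s l = 0},
      ∀ v ∈ Eig V c, V.ρ (gQ u st.1) v ∈ Eig V c := by
    intro st v hv
    have h1 := Eig_gQ hv st.1
    have h2 : σ u (-st.1) c = c := σ_stab (fun l h => by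
      show -st.1 l = 0
      rw [st.2 l h, neg_zero])
    rwa [h2] at h1
  haveI : Nontrivial ↥(Eig V c) := Submodule.nontrivial_iff_ne_bot.mpr hc
  obtain ⟨v₀, hv₀ne, hv₀eig⟩ := exists_common_eigenvector
    (fun st : {s : Fin k → ZMod n // ∀ l, c l ≠ 0 → s l = 0} =>
      (V.ρ (gQ u st.1)).restrict (hmapsto st))
    (by
      intro s t
      apply LinearMap.ext
      intro x
      rw [Module.End.mul_apply, Module.End.mul_apply]
      apply Subtype.ext
      rw [LinearMap.restrict_coe_apply, LinearMap.restrict_coe_apply,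
        LinearMap.restrict_coe_apply, LinearMap.restrict_coe_apply]
      rw [← Module.End.mul_apply, ← Module.End.mul_apply, ← map_mul, ← map_mul,
        gQ_mul, gQ_mul, add_comm])
  set vv : V := (v₀ : V) with hvvdef
  have hvvE : vv ∈ Eig V c := v₀.2
  have hvv0 : vv ≠ 0 := fun h => hv₀ne (Subtype.ext h)
  have heigvv : ∀ s : Fin k → ZMod n, (∀ l, c l ≠ 0 → s l = 0) →
      ∃ μ : ℂ, V.ρ (gQ u s) vv = μ • vv := by
    intro s hs
    obtain ⟨μ, hμ⟩ := hv₀eig ⟨s, hs⟩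
    refine ⟨μ, ?_⟩
    have h2 := congrArg (fun (x : ↥(Eig V c)) => (x : V)) hμ
    simpa [LinearMap.restrict_coe_apply] using h2
  -- the basis family
  set w : ({j : Fin k // c j ≠ 0} → ZMod n) → V :=
    fun t => V.ρ (gQ u (-(extJ c t))) vv with hwdef
  have hwEig : ∀ t, w t ∈ Eig V (σ u (extJ c t) c) := by
    intro t
    have h1 := Eig_gQ hvvE (-(extJ c t))
    rwa [neg_neg] at h1
  have hwne : ∀ t, w t ≠ 0 := by
    intro t h
    apply hvv0
    have h2 : V.ρ (gQ u (extJ c t)) (V.ρ (gQ u (-(extJ c t))) vv) = vv := by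
      rw [← Module.End.mul_apply, ← map_mul, gQ_mul, add_neg_cancel, gQ_zero, map_one,
        Module.End.one_apply]
    rw [show V.ρ (gQ u (-(extJ c t))) vv = w t from rfl, h, map_zero] at h2
    exact h2.symm
  have hchar_inj : Function.Injective
      (fun t : {j : Fin k // c j ≠ 0} → ZMod n => σ u (extJ c t) c) := by
    intro t t' h
    funext j
    have hl := congrFun h j.1
    have hl2 : (epow u (extJ c t j.1) : (ZMod p)ˣ) * c j.1
        = (epow u (extJ c t' j.1) : (ZMod p)ˣ) * c j.1 := hl
    have hl3 := mul_right_cancel₀ j.2 hl2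
    have hl4 : epow u (extJ c t j.1) = epow u (extJ c t' j.1) := Units.ext hl3
    have hl5 := epow_inj u horder hl4
    rwa [extJ_apply c t j.2, extJ_apply c t' j.2] at hl5
  -- linear independence
  have hLI : LinearIndependent ℂ w := by
    rw [Fintype.linearIndependent_iff]
    intro gc hg t₁
    have happ := congrArg (Pc V (σ u (extJ c t₁) c)) hg
    rw [map_sum, map_zero] at happ
    have hterm : ∀ t, Pc V (σ u (extJ c t₁) c) (gc t • w t)
        = (if t = t₁ then ((p:ℂ))^k • (gc t • w t) else 0) := by
      intro t
      rw [map_smul, Pc_of_mem_Eig (hwEig t)]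
      by_cases h : σ u (extJ c t₁) c = σ u (extJ c t) c
      · rw [if_pos h, if_pos (hchar_inj h).symm, smul_comm]
      · rw [if_neg h, if_neg (fun he => h (by rw [he])), zero_smul, smul_zero]
    rw [Finset.sum_congr rfl (fun t _ => hterm t), Finset.sum_ite_eq' Finset.univ t₁] at happ
    simp only [Finset.mem_univ, if_true] at happ
    have h2 : gc t₁ • w t₁ = 0 := by
      have := smul_eq_zero.mp happ
      tauto
    rcases smul_eq_zero.mp h2 with h | h
    · exact h
    · exact absurd h (hwne t₁)
  -- spanning
  set Sp := Submodule.span ℂ (Set.range w) with hSpdef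
  have hwmem : ∀ t, w t ∈ Sp := fun t => Submodule.subset_span ⟨t, rfl⟩
  have hQmem : ∀ (s : Fin k → ZMod n) (t), V.ρ (gQ u s) (w t) ∈ Sp := by
    intro s t
    set t' : {j : Fin k // c j ≠ 0} → ZMod n := fun j => t j - s j.1 with ht'
    set rr : Fin k → ZMod n := s - extJ c t + extJ c t' with hrr
    have hrrstab : ∀ l, c l ≠ 0 → rr l = 0 := by
      intro l h
      show s l - extJ c t l + extJ c t' l = 0
      rw [extJ_apply c t h, extJ_apply c t' h, ht']
      show s l - t ⟨l, h⟩ + (t ⟨l, h⟩ - s l) = 0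
      ring
    obtain ⟨μ, hμ⟩ := heigvv rr hrrstab
    have hsum : s + -(extJ c t) = -(extJ c t') + rr := by
      rw [hrr]; abel
    have hstep : V.ρ (gQ u s) (w t) = μ • w t' := by
      show V.ρ (gQ u s) (V.ρ (gQ u (-(extJ c t))) vv) = _
      rw [← Module.End.mul_apply, ← map_mul, gQ_mul, hsum, ← gQ_mul, map_mul,
        Module.End.mul_apply, hμ, map_smul]
    rw [hstep]
    exact Submodule.smul_mem _ _ (hwmem t')
  have hQinv : ∀ (s : Fin k → ZMod n), ∀ v ∈ Sp, V.ρ (gQ u s) v ∈ Sp := by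
    intro s v hv
    induction hv using Submodule.span_induction with
    | mem x hx =>
      obtain ⟨t, rfl⟩ := hx
      exact hQmem s t
    | zero => rw [map_zero]; exact Submodule.zero_mem _
    | add x y _ _ hx hy => rw [map_add]; exact Submodule.add_mem _ hx hy
    | smul a x _ hx => rw [map_smul]; exact Submodule.smul_mem _ _ hx
  have hAinv : ∀ (a : Fin k → ZMod p), ∀ v ∈ Sp, V.ρ (gA u a) v ∈ Sp := by
    intro a v hv
    induction hv using Submodule.span_induction with
    | mem x hx =>
      obtain ⟨t, rfl⟩ := hx
      rw [hwEig t a]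
      exact Submodule.smul_mem _ _ (hwmem t)
    | zero => rw [map_zero]; exact Submodule.zero_mem _
    | add x y _ _ hx hy => rw [map_add]; exact Submodule.add_mem _ hx hy
    | smul a' x _ hx => rw [map_smul]; exact Submodule.smul_mem _ _ hx
  have hinv : IsInvariant V Sp := by
    intro g v hv
    have hg : g = gA u g.a * gQ u g.s := (gA_gQ g.a g.s).symm
    rw [hg, map_mul, Module.End.mul_apply]
    exact hAinv g.a _ (hQinv g.s v hv)
  have hvvSp : vv ∈ Sp := by
    have hw0 : w 0 = vv := by
      rw [hwdef]
      show V.ρ (gQ u (-(extJ c 0))) vv = vv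
      rw [extJ_zero, neg_zero, gQ_zero, map_one, Module.End.one_apply]
    rw [← hw0]
    exact hwmem 0
  have hSpne : Sp ≠ ⊥ := fun h => hvv0 (by rw [h] at hvvSp; simpa using hvvSp)
  have hSptop : Sp = ⊤ := (invariant_eq_bot_or_top V Sp hinv).resolve_left hSpne
  have hb : Module.Basis ({j : Fin k // c j ≠ 0} → ZMod n) ℂ V :=
    Module.Basis.mk hLI (by exact hSptop.symm.le)
  refine ⟨Fintype.card {j : Fin k // c j ≠ 0}, ?_, ?_⟩
  · calc Fintype.card {j : Fin k // c j ≠ 0} ≤ Fintype.card (Fin k) :=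
        Fintype.card_subtype_le _
      _ = k := Fintype.card_fin k
  · rw [Module.finrank_eq_card_basis hb, Fintype.card_fun, ZMod.card]

end MainB


section MainA
open MyG
variable {p n k i : ℕ} [Fact p.Prime] [NeZero p] [NeZero n] {u : Uroot p n}

/-- zero-extension of `ZMod p` vectors from `Fin i` to `Fin k`. -/
noncomputable def extP (hik : i ≤ k) (v : Fin i → ZMod p) : Fin k → ZMod p :=
  fun l => if h : l.1 < i then v ⟨l.1, h⟩ else 0

/-- zero-extension of `ZMod n` vectors from `Fin i` to `Fin k`. -/
noncomputable def extN (hik : i ≤ k) (v : Fin i → ZMod n) : Fin k → ZMod n :=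
  fun l => if h : l.1 < i then v ⟨l.1, h⟩ else 0

lemma extP_castLE (hik : i ≤ k) (v : Fin i → ZMod p) (j : Fin i) :
    extP hik v (Fin.castLE hik j) = v j := by
  unfold extP
  rw [dif_pos (show (Fin.castLE hik j).1 < i from j.2)]
  exact congrArg v (Fin.ext rfl)

lemma extN_castLE (hik : i ≤ k) (v : Fin i → ZMod n) (j : Fin i) :
    extN hik v (Fin.castLE hik j) = v j := by
  unfold extN
  rw [dif_pos (show (Fin.castLE hik j).1 < i from j.2)]
  exact congrArg v (Fin.ext rfl)

lemma Θ_extP (hik : i ≤ k) (v : Fin i → ZMod p) (a : Fin k → ZMod p) :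
    Θ p (extP hik v) a = ∏ j : Fin i, χp p (v j * a (Fin.castLE hik j)) := by
  classical
  unfold Θ
  rw [← Finset.prod_subset (Finset.subset_univ
    ((Finset.univ : Finset (Fin i)).map ⟨Fin.castLE hik, Fin.castLE_injective hik⟩)) ?h1]
  · rw [Finset.prod_map]
    refine Finset.prod_congr rfl fun j _ => ?_
    simp only [Function.Embedding.coeFn_mk]
    rw [extP_castLE]
  · intro l _ hl
    have hli : ¬ l.1 < i := by
      intro hcon
      exact hl (Finset.mem_map.mpr ⟨⟨l.1, hcon⟩, Finset.mem_univ _, by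
        simp [Fin.castLE]⟩)
    show χp p (extP hik v l * a l) = 1
    unfold extP
    rw [dif_neg hli, zero_mul, AddChar.map_zero_eq_one]

/-- scalar factor of the representation. -/
noncomputable def fct (u : Uroot p n) (hik : i ≤ k) (g : MyG p n k u)
    (t : Fin i → ZMod n) : ℂ :=
  ∏ j : Fin i, χp p (((epow u (t j) : (ZMod p)ˣ) : ZMod p) * g.a (Fin.castLE hik j))

/-- the representation of dimension `n ^ i`. -/
noncomputable def ρA (u : Uroot p n) (hik : i ≤ k) :
    Representation ℂ (MyG p n k u) ((Fin i → ZMod n) → ℂ) where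
  toFun g :=
    { toFun := fun f t => fct u hik g t * f (t + fun j => g.s (Fin.castLE hik j))
      map_add' := by
        intro f1 f2
        funext t
        simp only [Pi.add_apply]
        ring
      map_smul' := by
        intro a f
        funext t
        simp only [Pi.smul_apply, smul_eq_mul, RingHom.id_apply]
        ring }
  map_one' := by
    apply LinearMap.ext
    intro f
    funext t
    show fct u hik 1 t * f (t + fun j => (1 : MyG p n k u).s (Fin.castLE hik j)) = f t
    have h1 : fct u hik (1 : MyG p n k u) t = 1 := by
      unfold fct
      apply Finset.prod_eq_one
      intro j _
      show χp p (_ * (0 : Fin k → ZMod p) (Fin.castLE hik j)) = 1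
      rw [Pi.zero_apply, mul_zero, AddChar.map_zero_eq_one]
    have h2 : (fun j => (1 : MyG p n k u).s (Fin.castLE hik j)) = (0 : Fin i → ZMod n) := rfl
    rw [h1, h2, add_zero, one_mul]
  map_mul' g h := by
    apply LinearMap.ext
    intro f
    funext t
    show fct u hik (g * h) t * f (t + fun j => (g * h).s (Fin.castLE hik j))
      = fct u hik g t * (fct u hik h (t + fun j => g.s (Fin.castLE hik j))
          * f ((t + fun j => g.s (Fin.castLE hik j)) + fun j => h.s (Fin.castLE hik j)))
    rw [← mul_assoc]
    congr 1
    · unfold fct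
      rw [← Finset.prod_mul_distrib]
      refine Finset.prod_congr rfl fun j _ => ?_
      have ha : (g * h).a (Fin.castLE hik j)
          = g.a (Fin.castLE hik j)
            + ((epow u (g.s (Fin.castLE hik j)) : (ZMod p)ˣ) : ZMod p) * h.a (Fin.castLE hik j) := rfl
      rw [ha, mul_add, AddChar.map_add_eq_mul]
      congr 1
      show χp p _ = χp p (((epow u ((t + fun j' => g.s (Fin.castLE hik j')) j) : (ZMod p)ˣ) : ZMod p) * h.a (Fin.castLE hik j))
      congr 1
      show ((epow u (t j) : (ZMod p)ˣ) : ZMod p) * (((epow u (g.s (Fin.castLE hik j)) : (ZMod p)ˣ) : ZMod p) * h.a (Fin.castLE hik j))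
        = ((epow u (t j + g.s (Fin.castLE hik j)) : (ZMod p)ˣ) : ZMod p) * h.a (Fin.castLE hik j)
      rw [epow_add]
      push_cast
      ring
    · congr 1
      funext j
      show t j + (g.s (Fin.castLE hik j) + h.s (Fin.castLE hik j)) = _
      show _ = (t j + g.s (Fin.castLE hik j)) + h.s (Fin.castLE hik j)
      rw [add_assoc]

lemma exists_simple_of_dim (horder : orderOf u.1 = n) (hik : i ≤ k) :
    ∃ V : FDRep ℂ (MyG p n k u), CategoryTheory.Simple V ∧ Module.finrank ℂ V = n ^ i := by
  classical
  refine ⟨FDRep.of (ρA u hik), ?_, ?_⟩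
  · apply simple_of_irred
    · exact inferInstanceAs (Nontrivial ((Fin i → ZMod n) → ℂ))
    · intro U hU
      rcases eq_or_ne U ⊥ with hB | hB
      · exact Or.inl hB
      right
      obtain ⟨f₀, hf₀U, hf₀⟩ := Submodule.ne_bot_iff U |>.mp hB
      obtain ⟨t₀, ht₀⟩ := Function.ne_iff.mp hf₀
      set PSG : (Fin i → ZMod n) → (Fin i → ZMod n) → ℂ := fun t1 => Pi.single t1 (1:ℂ) with hPSGdef
      have ht₀' : f₀ t₀ ≠ 0 := ht₀
      have hPSG : ∀ t1 t2 : Fin i → ZMod n, PSG t1 t2 = if t2 = t1 then (1:ℂ) else 0 := by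
        intro t1 t2
        simp only [hPSGdef]
        rw [Pi.single_apply]
      set wt : (Fin i → ZMod n) → (Fin k → ZMod p) :=
        fun t => extP hik (fun j => ((epow u (t j) : (ZMod p)ˣ) : ZMod p)) with hwt
      have hρgA : ∀ (a : Fin k → ZMod p) (f : (Fin i → ZMod n) → ℂ) (t : Fin i → ZMod n),
          (ρA u hik (gA u a)) f t = Θ p (wt t) a * f t := by
        intro a f t
        show fct u hik (gA u a) t * f (t + fun j => (gA u a).s (Fin.castLE hik j)) = _
        have hsh : (fun j => (gA u a).s (Fin.castLE hik j)) = (0 : Fin i → ZMod n) := rfl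
        rw [hsh, add_zero, hwt, Θ_extP]
        rfl
      have hwinj : ∀ t t' : Fin i → ZMod n, wt t = wt t' → t = t' := by
        intro t t' h
        funext j
        have h1 := congrFun h (Fin.castLE hik j)
        rw [hwt] at h1
        simp only [extP_castLE] at h1
        exact epow_inj u horder (Units.ext h1)
      -- the averaged element
      set S : (Fin i → ZMod n) → ℂ :=
        ∑ a : Fin k → ZMod p, (Θ p (wt t₀) a)⁻¹ • ((ρA u hik (gA u a)) f₀) with hS
      have hSU : S ∈ U := by
        rw [hS]
        apply Submodule.sum_mem
        intro a _
        exact Submodule.smul_mem _ _ (hU (gA u a) f₀ hf₀U)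
      have hSval : S = ((p:ℂ)^k * f₀ t₀) • (PSG t₀) := by
        funext t
        rw [hS]
        have hev : ∀ a : Fin k → ZMod p,
            ((Θ p (wt t₀) a)⁻¹ • ((ρA u hik (gA u a)) f₀)) t
            = Θ p (wt t - wt t₀) a * f₀ t := by
          intro a
          show (Θ p (wt t₀) a)⁻¹ * ((ρA u hik (gA u a)) f₀ t) = _
          rw [hρgA, ← mul_assoc, Θ_inv_mul]
        show (∑ a : Fin k → ZMod p, (Θ p (wt t₀) a)⁻¹ • ((ρA u hik (gA u a)) f₀)) t = _
        rw [Finset.sum_apply]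
        simp_rw [hev]
        rw [← Finset.sum_mul, Θ_sum]
        have hcond : (wt t - wt t₀ = 0) ↔ (t = t₀) := by
          rw [sub_eq_zero]
          exact ⟨fun h => hwinj t t₀ h, fun h => by rw [h]⟩
        by_cases h : t = t₀
        · rw [if_pos (hcond.mpr h), Pi.smul_apply, hPSG, if_pos h, h]
          simp [mul_comm]
        · rw [if_neg (fun hh => h (hcond.mp hh)), Pi.smul_apply, hPSG, if_neg h]
          simp
      have hscal : ((p:ℂ)^k * f₀ t₀) ≠ 0 := by
        apply mul_ne_zero _ ht₀'
        exact pow_ne_zero _ (by exact_mod_cast (Fact.out : p.Prime).ne_zero)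
      have hδ₀ : PSG t₀ ∈ U := by
        have := Submodule.smul_mem U ((p:ℂ)^k * f₀ t₀)⁻¹ hSU
        rw [hSval, smul_smul, inv_mul_cancel₀ hscal, one_smul] at this
        exact this
      have hδ : ∀ t₁ : Fin i → ZMod n, PSG t₁ ∈ U := by
        intro t₁
        have htr : (ρA u hik (gQ u (extN hik (t₀ - t₁)))) (PSG t₀)
            = PSG t₁ := by
          funext t
          show fct u hik (gQ u (extN hik (t₀ - t₁))) t
              * PSG t₀ (t + fun j => (gQ u (extN hik (t₀ - t₁))).s (Fin.castLE hik j))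
            = PSG t₁ t
          have h1 : fct u hik (gQ u (extN hik (t₀ - t₁))) t = 1 := by
            unfold fct
            apply Finset.prod_eq_one
            intro j _
            show χp p (_ * (0 : Fin k → ZMod p) (Fin.castLE hik j)) = 1
            rw [Pi.zero_apply, mul_zero, AddChar.map_zero_eq_one]
          have h2 : (fun j => (gQ u (extN hik (t₀ - t₁))).s (Fin.castLE hik j)) = t₀ - t₁ := by
            funext j
            show extN hik (t₀ - t₁) (Fin.castLE hik j) = (t₀ - t₁) j
            rw [extN_castLE]
          rw [h1, h2, one_mul, hPSG, hPSG]
          have hcond : (t + (t₀ - t₁) = t₀) ↔ (t = t₁) := by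
            constructor
            · intro h
              have := congrArg (fun x => x - (t₀ - t₁)) h
              simpa [sub_sub_cancel, add_sub_cancel_right] using this
            · intro h
              rw [h]
              abel
          by_cases h : t = t₁
          · rw [if_pos (hcond.mpr h), if_pos h]
          · rw [if_neg (fun hh => h (hcond.mp hh)), if_neg h]
        rw [← htr]
        exact hU (gQ u (extN hik (t₀ - t₁))) _ hδ₀
      rw [Submodule.eq_top_iff']
      intro f
      have hdecomp : f = ∑ t : Fin i → ZMod n, f t • PSG t := by
        have h1 : ∀ t : Fin i → ZMod n, f t • PSG t = Pi.single t (f t) := by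
          intro t
          simp only [hPSGdef]
          rw [← Pi.single_smul, smul_eq_mul, mul_one]
        simp_rw [h1]
        rw [Finset.univ_sum_single]
      rw [hdecomp]
      exact Submodule.sum_mem _ (fun t _ => Submodule.smul_mem _ _ (hδ t))
  · rw [show Module.finrank ℂ (FDRep.of (ρA u hik))
        = Module.finrank ℂ ((Fin i → ZMod n) → ℂ) from rfl,
      Module.finrank_fintype_fun_eq_card, Fintype.card_fun, ZMod.card, Fintype.card_fin]

end MainA

end BDGProof

open BDGProof in
theorem stmt5 (m k : ℕ) (hm : 0 < m) (hk : 0 < k) :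
    ∃ G : GrpCat, Finite G ∧ IsSolvable G ∧
      ∃ (P : Finset ℕ) (n : ℕ), P.card = m ∧ (∀ p ∈ P, p.Prime) ∧ n = ∏ p ∈ P, p ∧
        charDegrees G = {d : ℕ | ∃ i ≤ k, d = n ^ i} ∧
        (∀ (p : {p : ℕ // p.Prime ∧ ∃ x ∈ (charDegrees G \ {1} : Set ℕ), p ∣ x})
           (x : {x : ℕ // x ∈ (charDegrees G \ {1} : Set ℕ)}),
           (bdg (charDegrees G \ {1})).Adj (Sum.inr p) (Sum.inl x)) ∧
        (charDegrees G \ {1} : Set ℕ).ncard = k ∧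
        {p : ℕ | p.Prime ∧ ∃ x ∈ (charDegrees G \ {1} : Set ℕ), p ∣ x}.ncard = m := by
  classical
  obtain ⟨P, hPsub, hPcard⟩ := Nat.infinite_setOf_prime.exists_subset_card_eq m
  have hPprime : ∀ q ∈ P, q.Prime := fun q hq => hPsub hq
  have hn0 : (∏ q ∈ P, q) ≠ 0 :=
    Finset.prod_ne_zero_iff.mpr (fun q hq => (hPprime q hq).ne_zero)
  have hPne : P.Nonempty := Finset.card_pos.mp (by omega)
  have hn2 : 2 ≤ ∏ q ∈ P, q := by
    obtain ⟨q, hq⟩ := hPne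
    have h1 : q ∣ ∏ q ∈ P, q := Finset.dvd_prod_of_mem _ hq
    have h2 := (hPprime q hq).two_le
    have h3 := Nat.le_of_dvd (Nat.pos_of_ne_zero hn0) h1
    omega
  set n := ∏ q ∈ P, q with hn
  obtain ⟨p, hp, hnp, hmod⟩ := Nat.exists_prime_gt_modEq_one (k := n) n hn0
  haveI hfact : Fact p.Prime := ⟨hp⟩
  haveI : NeZero p := ⟨hp.ne_zero⟩
  haveI : NeZero n := ⟨hn0⟩
  have hdvd : n ∣ p - 1 := (Nat.modEq_iff_dvd' (by have := hp.two_le; omega)).mp hmod.symm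
  obtain ⟨g, hg⟩ := IsCyclic.exists_generator (α := (ZMod p)ˣ)
  have hcardu : Fintype.card (ZMod p)ˣ = p - 1 := ZMod.card_units p
  have hgord : orderOf g = p - 1 := by
    rw [orderOf_eq_card_of_forall_mem_zpowers hg, Nat.card_eq_fintype_card]
    exact hcardu
  have hune : orderOf g ≠ 0 := by
    rw [hgord]
    have := hp.two_le
    omega
  have hdvd' : n ∣ orderOf g := by rw [hgord]; exact hdvd
  have hu : orderOf (g ^ (orderOf g / n)) = n := orderOf_pow_orderOf_div hune hdvd'
  have hu1 : (g ^ (orderOf g / n)) ^ n = 1 := by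
    have h2 := pow_orderOf_eq_one (g ^ (orderOf g / n))
    rwa [hu] at h2
  set U : Uroot p n := ⟨g ^ (orderOf g / n), hu1⟩ with hUdef
  have horder : orderOf U.1 = n := hu
  -- character degrees
  have hCD : charDegrees (MyG p n k U) = {d : ℕ | ∃ i ≤ k, d = n ^ i} := by
    ext d
    constructor
    · rintro ⟨V, hV, rfl⟩
      haveI := hV
      obtain ⟨i, hik, hr⟩ := finrank_of_simple horder V
      exact ⟨i, hik, hr⟩
    · rintro ⟨i, hik, rfl⟩
      obtain ⟨V, hs, hr⟩ := exists_simple_of_dim horder hik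
      exact ⟨V, hs, hr⟩
  have hX : charDegrees (MyG p n k U) \ {1} = (fun i => n ^ i) '' (Set.Icc 1 k) := by
    rw [hCD]
    ext d
    simp only [Set.mem_diff, Set.mem_setOf_eq, Set.mem_singleton_iff, Set.mem_image,
      Set.mem_Icc]
    constructor
    · rintro ⟨⟨i, hik, rfl⟩, hne⟩
      refine ⟨i, ⟨?_, hik⟩, rfl⟩
      by_contra h0
      have : i = 0 := by omega
      subst this
      simp at hne
    · rintro ⟨i, ⟨h1i, hik⟩, rfl⟩
      refine ⟨⟨i, hik, rfl⟩, ?_⟩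
      have : 1 < n ^ i := Nat.one_lt_pow (by omega) (by omega)
      omega
  have hnck : (charDegrees (MyG p n k U) \ {1}).ncard = k := by
    rw [hX, Set.ncard_image_of_injective _ (Nat.pow_right_injective hn2),
      ← Finset.coe_Icc, Set.ncard_coe_finset, Nat.card_Icc]
    omega
  have hprimeset : {q : ℕ | q.Prime ∧ ∃ x ∈ charDegrees (MyG p n k U) \ {1}, q ∣ x}
      = (P : Set ℕ) := by
    ext q
    simp only [Set.mem_setOf_eq, hX, Set.mem_image, Set.mem_Icc, Finset.mem_coe]
    constructor
    · rintro ⟨hq, x, hx, hdvdx⟩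
      obtain ⟨i, ⟨h1i, hik⟩, rfl⟩ := hx
      have hqn : q ∣ n := hq.dvd_of_dvd_pow hdvdx
      obtain ⟨r, hrP, hqr⟩ := (Nat.Prime.prime hq).exists_mem_finset_dvd (hn ▸ hqn)
      rwa [(Nat.prime_dvd_prime_iff_eq hq (hPprime r hrP)).mp hqr]
    · intro hqP
      refine ⟨hPprime q hqP, n ^ 1, ⟨1, ⟨le_refl 1, hk⟩, rfl⟩, ?_⟩
      rw [pow_one, hn]
      exact Finset.dvd_prod_of_mem _ hqP
  have hncm : {q : ℕ | q.Prime ∧ ∃ x ∈ charDegrees (MyG p n k U) \ {1}, q ∣ x}.ncard = m := by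
    rw [hprimeset, Set.ncard_coe_finset, hPcard]
  refine ⟨GrpCat.of (MyG p n k U), ?_, ?_, P, n, hPcard, hPprime, hn, hCD, ?_, hnck, hncm⟩
  · show Finite (MyG p n k U); infer_instance
  · exact (inferInstance : Group.IsSolvable (MyG p n k U))
  · intro pr x
    have hpr : pr.1.Prime ∧ ∃ x₀ ∈ charDegrees (MyG p n k U) \ {1}, pr.1 ∣ x₀ := pr.2
    have hx : x.1 ∈ (fun i => n ^ i) '' (Set.Icc 1 k) := by rw [← hX]; exact x.2
    obtain ⟨i, hi, hxi⟩ := hx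
    obtain ⟨hq, x₀, hx₀, hdvd₀⟩ := hpr
    rw [hX] at hx₀
    obtain ⟨i₀, hi₀, hx₀i⟩ := hx₀
    have hqn : pr.1 ∣ n := hq.dvd_of_dvd_pow (hx₀i ▸ hdvd₀)
    have hqx : pr.1 ∣ x.1 := by
      rw [← hxi]
      exact hqn.trans (dvd_pow_self n (by simp only [Set.mem_Icc] at hi; omega))
    exact (SimpleGraph.fromRel_adj _ _ _).mpr ⟨by simp, Or.inl hqx⟩
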